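/- arXiv:2412.10602 — 2 statements merged into one kernel-verified Lean document; each statement's English description precedes it below -/
import Mathlib

section
/- Let a, b, c ∈ 𝕊max^∨. Then 𝟘 < (a ⊙ x₁ ⊙ x₁) ⊕ (b ⊙ x₁ ⊙ x₂) ⊕ (c ⊙ x₂ ⊙ x₂) holds for every pair (x₁, x₂) ∈ (𝕊max^∨)² ∖ {(𝟘,𝟘)} if and only if 𝟘 < a, 𝟘 < c, and b ⊙ b < a ⊙ c. -/
/-!
Common framework: the symmetrized tropical semiring 𝕊max over a linearly
ordered abelian group Γ, represented concretely: an element is either 𝟘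
(represented by `none`) or a pair of a modulus `c : Γ` and a sign
(positive, negative or balanced), matching the classes of the quotient
𝕋max²/ℛ described in the paper.
-/

namespace TropPaper

inductive SSign : Type
  | pos
  | neg
  | bal
  deriving DecidableEq

/-- The symmetrized tropical semiring 𝕊max(Γ): `none` is 𝟘, and
`some (c, s)` is the class of modulus `c` and sign `s`. -/
def Smax (Γ : Type) : Type := Option (Γ × SSign)

/-- Γ is divisible. -/
def DivisibleGrp (Γ : Type) [AddCommGroup Γ] : Prop :=
  ∀ k : ℕ, 0 < k → ∀ a : Γ, ∃ b : Γ, k • b = a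

section Defs

variable {Γ : Type} [AddCommGroup Γ] [LinearOrder Γ] [IsOrderedAddMonoid Γ]

/-- 𝟘 -/
def szero : Smax Γ := none

/-- 𝟙 -/
def sone : Smax Γ := some ((0 : Γ), SSign.pos)

/-- modulus |·| : 𝕊max → 𝕋max = WithBot Γ -/
def smod : Smax Γ → WithBot Γ
  | none => ⊥
  | some (c, _) => (c : WithBot Γ)

def sgnMul : SSign → SSign → SSign
  | SSign.pos, t => t
  | SSign.neg, SSign.pos => SSign.neg
  | SSign.neg, SSign.neg => SSign.pos
  | SSign.neg, SSign.bal => SSign.bal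
  | SSign.bal, _ => SSign.bal

/-- ⊕ on 𝕊max -/
def sadd : Smax Γ → Smax Γ → Smax Γ
  | none, b => b
  | some a, none => some a
  | some (c, s), some (d, t) =>
      if c < d then some (d, t)
      else if d < c then some (c, s)
      else some (c, if s = t then s else SSign.bal)

/-- ⊖ (unary) on 𝕊max -/
def sneg : Smax Γ → Smax Γ
  | none => none
  | some (c, SSign.pos) => some (c, SSign.neg)
  | some (c, SSign.neg) => some (c, SSign.pos)
  | some (c, SSign.bal) => some (c, SSign.bal)

/-- ⊙ on 𝕊max -/
def smul : Smax Γ → Smax Γ → Smax Γ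
  | none, _ => none
  | some _, none => none
  | some (c, s), some (d, t) => some (c + d, sgnMul s t)

/-- a ⊖ b -/
def ssub (a b : Smax Γ) : Smax Γ := sadd a (sneg b)

/-- a° = a ⊖ a -/
def sbal (a : Smax Γ) : Smax Γ := ssub a a

/-- the positive element with the same modulus (|·| seen inside 𝕊max⊕) -/
def sabs : Smax Γ → Smax Γ
  | none => none
  | some (c, _) => some (c, SSign.pos)

/-- multiplicative inverse (of invertible, i.e. signed nonzero, elements) -/
def sinv : Smax Γ → Smax Γ
  | none => none
  | some (c, s) => some (-c, s)

/-- a^{⊙k} -/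
def spow (a : Smax Γ) : ℕ → Smax Γ
  | 0 => sone
  | k + 1 => smul a (spow a k)

/-- membership in 𝕊max° (balanced elements together with 𝟘) -/
def IsBal : Smax Γ → Prop
  | none => True
  | some (_, s) => s = SSign.bal

/-- membership in 𝕊max⊕ (positive elements together with 𝟘) -/
def IsPos : Smax Γ → Prop
  | none => True
  | some (_, s) => s = SSign.pos

/-- membership in 𝕊max^∨ (signed elements) -/
def IsSigned : Smax Γ → Prop
  | none => True
  | some (_, s) => s ≠ SSign.bal

/-- the balance relation a ∇ b -/
def Balance (a b : Smax Γ) : Prop := IsBal (ssub a b)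

/-- a ⪯ b -/
def natLe (a b : Smax Γ) : Prop := sadd a b = b

/-- a ≤ b :⟺ b ⊖ a ∈ 𝕊max⊕ ∪ 𝕊max° -/
def sle (a b : Smax Γ) : Prop := IsPos (ssub b a) ∨ IsBal (ssub b a)

/-- a < b :⟺ b ⊖ a ∈ 𝕊max⊕ ∖ {𝟘} -/
def slt (a b : Smax Γ) : Prop := IsPos (ssub b a) ∧ ssub b a ≠ szero

/-- finite ⊕-sum over a list -/
def sumS {α : Type} (l : List α) (f : α → Smax Γ) : Smax Γ :=
  (l.map f).foldr sadd szero

/-- finite ⊙-product over a list -/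
def prodS {α : Type} (l : List α) (f : α → Smax Γ) : Smax Γ :=
  (l.map f).foldr smul sone

/-- the zero vector -/
def zeroVecS {n : ℕ} : Fin n → Smax Γ := fun _ => szero

def VecSigned {n : ℕ} (x : Fin n → Smax Γ) : Prop := ∀ i, IsSigned (x i)

def MatSigned {n : ℕ} (A : Matrix (Fin n) (Fin n) (Smax Γ)) : Prop :=
  ∀ i j, IsSigned (A i j)

def SymmS {n : ℕ} (A : Matrix (Fin n) (Fin n) (Smax Γ)) : Prop :=
  ∀ i j, A i j = A j i

/-- A ⊙ v -/
def matVecS {n : ℕ} (A : Matrix (Fin n) (Fin n) (Smax Γ)) (v : Fin n → Smax Γ) :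
    Fin n → Smax Γ :=
  fun i => sumS (List.finRange n) fun j => smul (A i j) (v j)

/-- A ⊙ B -/
def matMulS {n : ℕ} (A B : Matrix (Fin n) (Fin n) (Smax Γ)) :
    Matrix (Fin n) (Fin n) (Smax Γ) :=
  Matrix.of fun i j => sumS (List.finRange n) fun l => smul (A i l) (B l j)

/-- the identity matrix I -/
def idMatS {n : ℕ} : Matrix (Fin n) (Fin n) (Smax Γ) :=
  Matrix.of fun i j => if i = j then sone else szero

/-- xᵀ ⊙ A ⊙ x -/
def quadFormS {n : ℕ} (A : Matrix (Fin n) (Fin n) (Smax Γ)) (x : Fin n → Smax Γ) :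
    Smax Γ :=
  sumS (List.finRange n) fun i => sumS (List.finRange n) fun j =>
    smul (x i) (smul (A i j) (x j))

/-- tropical positive definiteness (the quadratic-form condition) -/
def TPD {n : ℕ} (A : Matrix (Fin n) (Fin n) (Smax Γ)) : Prop :=
  ∀ x : Fin n → Smax Γ, VecSigned x → x ≠ zeroVecS → slt szero (quadFormS A x)

/-- tropical positive semidefiniteness -/
def TPSD {n : ℕ} (A : Matrix (Fin n) (Fin n) (Smax Γ)) : Prop :=
  ∀ x : Fin n → Smax Γ, VecSigned x → x ≠ zeroVecS → sle szero (quadFormS A x)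

/-- sgn(π) ∈ {𝟙, ⊖𝟙} -/
def permSignS {n : ℕ} (π : Equiv.Perm (Fin n)) : Smax Γ :=
  if (Equiv.Perm.sign π : ℤ) = 1 then sone else sneg sone

/-- the determinant over 𝕊max -/
noncomputable def detS {n : ℕ} (M : Matrix (Fin n) (Fin n) (Smax Γ)) : Smax Γ :=
  sumS (Finset.univ : Finset (Equiv.Perm (Fin n))).toList fun π =>
    smul (permSignS π) (prodS (List.finRange n) fun i => M i (π i))

/-- the adjugate matrix over 𝕊max -/
noncomputable def adjS {n : ℕ} (M : Matrix (Fin (n+1)) (Fin (n+1)) (Smax Γ)) :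
    Matrix (Fin (n+1)) (Fin (n+1)) (Smax Γ) :=
  Matrix.of fun i j =>
    smul (spow (sneg sone) (i.val + j.val))
      (detS (Matrix.of fun a b : Fin n => M (Fin.succAbove j a) (Fin.succAbove i b)))

/-- γ ⊙ I ⊖ A -/
def charMatS {n : ℕ} (γ : Smax Γ) (A : Matrix (Fin n) (Fin n) (Smax Γ)) :
    Matrix (Fin n) (Fin n) (Smax Γ) :=
  Matrix.of fun i j => ssub (smul γ (idMatS i j)) (A i j)

/-- tr_k(A) = ⊕_{|K| = k} det(A[K,K]) -/
noncomputable def trkS {n : ℕ} (k : ℕ) (A : Matrix (Fin n) (Fin n) (Smax Γ)) : Smax Γ :=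
  sumS ((Finset.univ : Finset (Fin n)).powersetCard k).attach.toList fun K =>
    detS (Matrix.of fun a b : Fin k =>
      A (K.1.orderEmbOfFin (Finset.mem_powersetCard.mp K.2).2 a)
        (K.1.orderEmbOfFin (Finset.mem_powersetCard.mp K.2).2 b))

/-- matrix power A^{⊙k} -/
def matPowS {n : ℕ} (A : Matrix (Fin n) (Fin n) (Smax Γ)) :
    ℕ → Matrix (Fin n) (Fin n) (Smax Γ)
  | 0 => idMatS
  | k + 1 => matMulS A (matPowS A k)

/-- partial Kleene sums I ⊕ A ⊕ ⋯ ⊕ A^{⊙m} -/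
def starPartialS {n : ℕ} (A : Matrix (Fin n) (Fin n) (Smax Γ)) (m : ℕ) :
    Matrix (Fin n) (Fin n) (Smax Γ) :=
  Matrix.of fun i j => sumS (List.range (m+1)) fun k => matPowS A k i j

/-- the diagonal matrix D^(k) with diagonal (γ₁,…,γ_{k−1},𝟘,…,𝟘) (0-based k) -/
def DmatS {n : ℕ} (A : Matrix (Fin n) (Fin n) (Smax Γ)) (k : Fin n) :
    Matrix (Fin n) (Fin n) (Smax Γ) :=
  Matrix.of fun i j => if i = j ∧ i < k then A i i else szero

/-- the complementary matrix A^(k) -/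
def AmatS {n : ℕ} (A : Matrix (Fin n) (Fin n) (Smax Γ)) (k : Fin n) :
    Matrix (Fin n) (Fin n) (Smax Γ) :=
  Matrix.of fun i j => if i ≠ j ∨ k ≤ i then A i j else szero

/-- M = (γ⊙I ⊖ D^(k))^{⊙−1} ⊙ A^(k) -/
def MmatS {n : ℕ} (A : Matrix (Fin n) (Fin n) (Smax Γ)) (k : Fin n) :
    Matrix (Fin n) (Fin n) (Smax Γ) :=
  Matrix.of fun i j =>
    smul (sinv (if i < k then sneg (A i i) else A k k)) (AmatS A k i j)

/-- λ_k = (⊖𝟙)^{⊙(k−1)} ⊙ γ₁ ⊙ ⋯ ⊙ γ_{k−1} ⊙ γ^{⊙(n−k)} (0-based k, size n) -/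
def lamkS {n : ℕ} (A : Matrix (Fin n) (Fin n) (Smax Γ)) (k : Fin n) : Smax Γ :=
  smul (spow (sneg sone) k.val)
    (smul (prodS ((List.finRange n).filter (fun i => i < k)) fun i => A i i)
      (spow (A k k) (n - 1 - k.val)))

/-- irreducibility: the digraph of nonzero entries is strongly connected -/
def IrreducibleS {n : ℕ} (A : Matrix (Fin n) (Fin n) (Smax Γ)) : Prop :=
  ∀ i j : Fin n, Relation.ReflTransGen (fun a b => A a b ≠ szero) i j

/-- diagonal entries sorted non-increasingly for ⪯ -/
def DiagSortedS {n : ℕ} (A : Matrix (Fin n) (Fin n) (Smax Γ)) : Prop :=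
  ∀ i j : Fin n, i ≤ j → natLe (A j j) (A i i)

/-! 𝕋max-side notions (for the characteristic polynomial of |A|). -/

/-- finite max over a list in 𝕋max -/
def sumT {α : Type} (l : List α) (f : α → WithBot Γ) : WithBot Γ :=
  (l.map f).foldr max ⊥

/-- finite ⊙-product over a list in 𝕋max -/
def prodT {α : Type} (l : List α) (f : α → WithBot Γ) : WithBot Γ :=
  (l.map f).foldr (· + ·) (0 : WithBot Γ)

/-- the permanent over 𝕋max -/
noncomputable def perT {n : ℕ} (M : Matrix (Fin n) (Fin n) (WithBot Γ)) : WithBot Γ :=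
  sumT (Finset.univ : Finset (Equiv.Perm (Fin n))).toList fun π =>
    prodT (List.finRange n) fun i => M i (π i)

/-- coefficient of X^k in the 𝕋max-characteristic polynomial of B -/
noncomputable def charCoeffT {n : ℕ} (B : Matrix (Fin n) (Fin n) (WithBot Γ)) (k : ℕ) : WithBot Γ :=
  if k ≤ n then
    sumT ((Finset.univ : Finset (Fin n)).powersetCard (n - k)).attach.toList fun K =>
      perT (Matrix.of fun a b : Fin (n - k) =>
        B (K.1.orderEmbOfFin (Finset.mem_powersetCard.mp K.2).2 a)
          (K.1.orderEmbOfFin (Finset.mem_powersetCard.mp K.2).2 b))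
  else ⊥

/-- multiplicity of x as a 𝕋max-root of the formal polynomial of degree ≤ n
with coefficients Q: for x = ⊥ it is the lower degree, for x = c ∈ Γ it is the
difference between the largest and smallest exponents attaining
max_k (Q_k + k·c). -/
noncomputable def rootMultT (n : ℕ) (Q : ℕ → WithBot Γ) (x : WithBot Γ) : ℕ :=
  WithBot.recBotCoe
    (sInf {k | Q k ≠ ⊥})
    (fun c =>
      sSup {k | k ≤ n ∧ Q k + ((k • c : Γ) : WithBot Γ)
              = sumT (List.range (n+1)) (fun l => Q l + ((l • c : Γ) : WithBot Γ))}
        - sInf {k | k ≤ n ∧ Q k + ((k • c : Γ) : WithBot Γ)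
              = sumT (List.range (n+1)) (fun l => Q l + ((l • c : Γ) : WithBot Γ))})
    x

end Defs

/-- the signed valuation associated with a valuation v on an ordered field L -/
def svMap {Γ : Type} [AddCommGroup Γ] [LinearOrder Γ] [IsOrderedAddMonoid Γ] {L : Type} [Field L] [LinearOrder L] [IsStrictOrderedRing L]
    (v : L → WithBot Γ) (b : L) : Smax Γ :=
  if b = 0 then szero
  else if 0 < b then WithBot.recBotCoe szero (fun c => some (c, SSign.pos)) (v b)
  else WithBot.recBotCoe szero (fun c => some (c, SSign.neg)) (v b)

end TropPaper

namespace TropPaper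

section Aux

open SSign

variable {Γ : Type} [AddCommGroup Γ] [LinearOrder Γ] [IsOrderedAddMonoid Γ]

lemma smul_none_right (x : Smax Γ) : smul x (none : Smax Γ) = none := by
  cases x <;> rfl

lemma sadd_none_right (x : Smax Γ) : sadd x (none : Smax Γ) = x := by
  cases x with
  | none => rfl
  | some p => rfl

lemma sadd_big_right {m1 m2 : Γ} (s t : SSign) (h : m1 < m2) :
    sadd (some (m1, s)) (some (m2, t)) = some (m2, t) := by
  simp [sadd, h]; rfl

lemma sadd_big_left {m1 m2 : Γ} (s t : SSign) (h : m2 < m1) :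
    sadd (some (m1, s)) (some (m2, t)) = some (m1, s) := by
  simp [sadd, not_lt.mpr h.le, h]; rfl

lemma sadd_eq_of_eq {m : Γ} (s t : SSign) :
    sadd (some (m, s)) (some (m, t)) = some (m, if s = t then s else SSign.bal) := by
  simp [sadd]; rfl

lemma sadd_pos_pos (m1 m2 : Γ) :
    sadd (some (m1, pos)) (some (m2, pos)) = some (max m1 m2, pos) := by
  rcases lt_trichotomy m1 m2 with h | h | h
  · rw [sadd_big_right _ _ h, max_eq_right h.le]
  · subst h; rw [sadd_eq_of_eq, max_self]; simp; rfl
  · rw [sadd_big_left _ _ h, max_eq_left h.le]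

lemma slt_zero_iff (x : Smax Γ) : slt szero x ↔ ∃ m, x = some (m, pos) := by
  have hx : ssub x szero = x := by
    cases x with
    | none => rfl
    | some p => rfl
  unfold slt
  rw [hx]
  constructor
  · rintro ⟨h1, h2⟩
    cases x with
    | none => exact absurd rfl h2
    | some p =>
      obtain ⟨m, s⟩ := p
      have hs : s = SSign.pos := h1
      exact ⟨m, by rw [hs]⟩
  · rintro ⟨m, rfl⟩
    exact ⟨rfl, by simp [szero]; exact Option.some_ne_none _⟩

lemma slt_some_pos_iff (m1 m2 : Γ) :
    slt (some (m1, pos)) (some (m2, pos)) ↔ m1 < m2 := by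
  have hs : ssub (some (m2, pos)) (some (m1, pos)) = sadd (some (m2, pos)) (some (m1, neg)) := rfl
  unfold slt
  rw [hs]
  constructor
  · rintro ⟨h1, h2⟩
    by_contra hlt
    push_neg at hlt
    rcases eq_or_lt_of_le hlt with h | h
    · subst h
      rw [sadd_eq_of_eq] at h1
      simp [IsPos] at h1
    · rw [sadd_big_right _ _ h] at h1
      simp [IsPos] at h1
  · intro h
    rw [sadd_big_left _ _ h]
    simp [IsPos, szero]; exact Option.some_ne_none _

lemma sgnMul_self {s : SSign} (hs : s ≠ bal) : sgnMul s s = pos := by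
  cases s <;> simp_all [sgnMul]

lemma sgnMul_pos_right (s : SSign) : sgnMul s pos = s := by
  cases s <;> rfl

/-- opposite sign -/
def sOpp : SSign → SSign
  | pos => neg
  | neg => pos
  | bal => bal

lemma sOpp_ne_bal {s : SSign} (hs : s ≠ bal) : sOpp s ≠ bal := by
  cases s <;> simp_all [sOpp]

lemma sgnMul_sOpp {s : SSign} (hs : s ≠ bal) : sgnMul s (sOpp s) = neg := by
  cases s <;> simp_all [sOpp, sgnMul]

/-- The backward direction workhorse. -/
lemma bwd_aux (α γ : Γ) (b : Smax Γ)
    (hbac : ∀ β s, b = some (β, s) → β + β < α + γ) :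
    ∀ x₁ x₂ : Smax Γ, IsSigned x₁ → IsSigned x₂ → ¬(x₁ = szero ∧ x₂ = szero) →
      slt szero
        (sadd (sadd (smul (some (α, pos)) (smul x₁ x₁)) (smul b (smul x₁ x₂)))
          (smul (some (γ, pos)) (smul x₂ x₂))) := by
  intro x₁ x₂ h₁ h₂ hne
  cases x₁ with
  | none =>
    cases x₂ with
    | none => exact absurd ⟨rfl, rfl⟩ hne
    | some p =>
      obtain ⟨u, τ⟩ := p
      have hτ : τ ≠ bal := h₂
      have hC : smul (some (γ, pos)) (smul (some (u, τ)) (some (u, τ)))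
          = some (γ + (u + u), pos) := by
        rw [show smul (some (u, τ)) (some (u, τ)) = some (u + u, sgnMul τ τ) from rfl,
          sgnMul_self hτ]
        rfl
      have z1 : ∀ y : Smax Γ, smul none y = none := fun _ => rfl
      have z2 : ∀ y : Smax Γ, sadd none y = y := fun _ => rfl
      show slt szero (sadd (sadd (smul (some (α, pos)) none) (smul b none)) (smul (some (γ, pos)) (smul (some (u, τ)) (some (u, τ)))))
      erw [smul_none_right b]
      show slt szero (smul (some (γ, pos)) (smul (some (u, τ)) (some (u, τ))))
      erw [hC, slt_zero_iff]
      exact ⟨_, rfl⟩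
  | some p =>
    obtain ⟨t, σ⟩ := p
    have hσ : σ ≠ bal := h₁
    have hA : smul (some (α, pos)) (smul (some (t, σ)) (some (t, σ)))
        = some (α + (t + t), pos) := by
      rw [show smul (some (t, σ)) (some (t, σ)) = some (t + t, sgnMul σ σ) from rfl,
        sgnMul_self hσ]
      rfl
    cases x₂ with
    | none =>
      show slt szero (sadd (sadd (smul (some (α, pos)) (smul (some (t, σ)) (some (t, σ)))) (smul b none)) none)
      erw [smul_none_right b]
      show slt szero (smul (some (α, pos)) (smul (some (t, σ)) (some (t, σ))))
      erw [hA, slt_zero_iff]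
      exact ⟨_, rfl⟩
    | some q =>
      obtain ⟨u, τ⟩ := q
      have hτ : τ ≠ bal := h₂
      have hC : smul (some (γ, pos)) (smul (some (u, τ)) (some (u, τ)))
          = some (γ + (u + u), pos) := by
        rw [show smul (some (u, τ)) (some (u, τ)) = some (u + u, sgnMul τ τ) from rfl,
          sgnMul_self hτ]
        rfl
      rw [hA, hC]
      cases b with
      | none =>
        erw [show smul (none : Smax Γ) (smul (some (t, σ)) (some (u, τ))) = none from rfl,
          sadd_none_right, sadd_pos_pos, slt_zero_iff]
        exact ⟨_, rfl⟩
      | some r =>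
        obtain ⟨β, sb⟩ := r
        have hβ : β + β < α + γ := hbac β sb rfl
        have hB : smul (some (β, sb)) (smul (some (t, σ)) (some (u, τ)))
            = some (β + (t + u), sgnMul sb (sgnMul σ τ)) := rfl
        rw [hB]
        -- key modulus inequality
        have hkey : β + (t + u) < max (α + (t + t)) (γ + (u + u)) := by
          by_contra hcon
          push_neg at hcon
          have h1 : α + (t + t) ≤ β + (t + u) := le_trans (le_max_left _ _) hcon
          have h2 : γ + (u + u) ≤ β + (t + u) := le_trans (le_max_right _ _) hcon
          have h3 : (α + (t + t)) + (γ + (u + u)) ≤ (β + (t + u)) + (β + (t + u)) :=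
            add_le_add h1 h2
          have h4 : (α + γ) + ((t + u) + (t + u)) ≤ (β + β) + ((t + u) + (t + u)) := by
            calc (α + γ) + ((t + u) + (t + u)) = (α + (t + t)) + (γ + (u + u)) := by abel
            _ ≤ (β + (t + u)) + (β + (t + u)) := h3
            _ = (β + β) + ((t + u) + (t + u)) := by abel
          exact absurd (le_of_add_le_add_right h4) (not_le.mpr hβ)
        set sB := sgnMul sb (sgnMul σ τ) with hsB
        rcases lt_or_ge (β + (t + u)) (α + (t + t)) with hlt | hle
        · erw [sadd_big_left _ _ hlt, sadd_pos_pos, slt_zero_iff]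
          exact ⟨_, rfl⟩
        · -- then β + (t+u) < γ + (u+u)
          have hltC : β + (t + u) < γ + (u + u) := by
            rcases max_cases (α + (t + t)) (γ + (u + u)) with ⟨hm, _⟩ | ⟨hm, _⟩
            · exact absurd (hm ▸ hkey) (not_lt.mpr hle)
            · exact hm ▸ hkey
          have hAB : ∃ m s', sadd (some (α + (t + t), pos)) (some (β + (t + u), sB))
              = some (m, s') ∧ m ≤ β + (t + u) := by
            rcases eq_or_lt_of_le hle with he | hl
            · rw [← he, sadd_eq_of_eq]
              exact ⟨_, _, rfl, le_rfl⟩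
            · rw [sadd_big_right _ _ hl]
              exact ⟨_, _, rfl, le_rfl⟩
          obtain ⟨m, s', hm, hmle⟩ := hAB
          erw [hm, sadd_big_right _ _ (lt_of_le_of_lt hmle hltC), slt_zero_iff]
          exact ⟨_, rfl⟩

end Aux

/-- for signed a, b, c, the binary quadratic form
a⊙x₁⊙x₁ ⊕ b⊙x₁⊙x₂ ⊕ c⊙x₂⊙x₂ is > 𝟘 on all signed (x₁,x₂) ≠ (𝟘,𝟘)
iff 𝟘 < a, 𝟘 < c and b⊙b < a⊙c. -/
theorem binary_form_positive_iff {Γ : Type} [AddCommGroup Γ] [LinearOrder Γ] [IsOrderedAddMonoid Γ] [Nontrivial Γ]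
    (hdiv : DivisibleGrp Γ)
    (a b c : Smax Γ) (ha : IsSigned a) (hb : IsSigned b) (hc : IsSigned c) :
    (∀ x₁ x₂ : Smax Γ, IsSigned x₁ → IsSigned x₂ → ¬(x₁ = szero ∧ x₂ = szero) →
        slt szero
          (sadd (sadd (smul a (smul x₁ x₁)) (smul b (smul x₁ x₂)))
            (smul c (smul x₂ x₂)))) ↔
      (slt szero a ∧ slt szero c ∧ slt (smul b b) (smul a c)) := by
  have hone : IsSigned (sone : Smax Γ) := by
    intro h; exact SSign.noConfusion h
  constructor
  · intro H
    -- a is positive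
    obtain ⟨α, hα⟩ : ∃ m, a = some (m, SSign.pos) := by
      have h := H sone szero hone trivial (by simp [sone, szero])
      rw [show smul a (smul (sone : Smax Γ) sone) = smul a (some ((0 : Γ) + 0, SSign.pos))
          from rfl, show smul (sone : Smax Γ) szero = none from smul_none_right _,
        smul_none_right, show smul (szero : Smax Γ) szero = none from rfl,
        smul_none_right, sadd_none_right, sadd_none_right, slt_zero_iff] at h
      obtain ⟨m, hm⟩ := h
      cases a with
      | none => cases hm
      | some p =>
        obtain ⟨ma, sa⟩ := p
        rw [show smul (some (ma, sa)) (some ((0 : Γ) + 0, SSign.pos))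
            = some (ma + (0 + 0), sa) from by rw [show smul (some (ma, sa)) (some ((0 : Γ) + 0, SSign.pos)) = some (ma + (0+0), sgnMul sa SSign.pos) from rfl, sgnMul_pos_right]] at hm
        obtain ⟨h1, h2⟩ := Prod.mk.injEq .. ▸ Option.some.injEq .. ▸ hm
        exact ⟨ma, by rw [h2]⟩
    -- c is positive
    obtain ⟨γ, hγ⟩ : ∃ m, c = some (m, SSign.pos) := by
      have h := H szero sone trivial hone (by simp [sone, szero])
      rw [show smul (szero : Smax Γ) szero = none from rfl, smul_none_right,
        show smul (szero : Smax Γ) sone = none from rfl, smul_none_right,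
        show sadd (none : Smax Γ) none = none from rfl,
        show ∀ y : Smax Γ, sadd none y = y from fun y => rfl,
        show smul (sone : Smax Γ) sone = some ((0 : Γ) + 0, SSign.pos) from rfl,
        slt_zero_iff] at h
      obtain ⟨m, hm⟩ := h
      cases c with
      | none => cases hm
      | some p =>
        obtain ⟨mc, sc⟩ := p
        rw [show smul (some (mc, sc)) (some ((0 : Γ) + 0, SSign.pos))
            = some (mc + (0 + 0), sgnMul sc SSign.pos) from rfl, sgnMul_pos_right] at hm
        obtain ⟨h1, h2⟩ := Prod.mk.injEq .. ▸ Option.some.injEq .. ▸ hm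
        exact ⟨mc, by rw [h2]⟩
    refine ⟨?_, ?_, ?_⟩
    · erw [hα, slt_zero_iff]; exact ⟨α, rfl⟩
    · erw [hγ, slt_zero_iff]; exact ⟨γ, rfl⟩
    · cases b with
      | none =>
        rw [hα, hγ]
        refine ⟨?_, ?_⟩
        · show IsPos (sadd (some (α + γ, sgnMul SSign.pos SSign.pos)) (sneg none))
          erw [show sneg (none : Smax Γ) = none from rfl, sadd_none_right]
          rfl
        · show sadd (some (α + γ, sgnMul SSign.pos SSign.pos)) (sneg none) ≠ szero
          erw [show sneg (none : Smax Γ) = none from rfl, sadd_none_right]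
          simp [szero]; exact Option.some_ne_none _
      | some p =>
        obtain ⟨β, s⟩ := p
        have hs : s ≠ SSign.bal := hb
        rw [hα, hγ,
          show smul (some (β, s)) (some (β, s)) = some (β + β, sgnMul s s) from rfl,
          sgnMul_self hs,
          show smul (some (α, SSign.pos)) (some (γ, SSign.pos))
            = some (α + γ, SSign.pos) from rfl, slt_some_pos_iff]
        by_contra hcon
        push_neg at hcon
        -- use the witness x₁ = (γ - β, opposite sign of s), x₂ = 𝟙
        set t : Γ := γ - β with ht
        have h := H (some (t, sOpp s)) sone (sOpp_ne_bal hs) hone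
          (by simp [sone, szero])
        rw [hα, hγ] at h
        have hA : smul (some (α, SSign.pos)) (smul (some (t, sOpp s)) (some (t, sOpp s)))
            = some (α + (t + t), SSign.pos) := by
          rw [show smul (some (t, sOpp s)) (some (t, sOpp s))
              = some (t + t, sgnMul (sOpp s) (sOpp s)) from rfl,
            sgnMul_self (sOpp_ne_bal hs)]
          rfl
        have hB : smul (some (β, s)) (smul (some (t, sOpp s)) (sone : Smax Γ))
            = some (γ + ((0 : Γ) + 0), SSign.neg) := by
          rw [show smul (some (t, sOpp s)) (sone : Smax Γ)
              = some (t + 0, sgnMul (sOpp s) SSign.pos) from rfl, sgnMul_pos_right,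
            show smul (some (β, s)) (some (t + 0, sOpp s))
              = some (β + (t + 0), sgnMul s (sOpp s)) from rfl, sgnMul_sOpp hs]
          congr 2
          rw [ht]; abel
        have hC : smul (some (γ, SSign.pos)) (smul (sone : Smax Γ) sone)
            = some (γ + ((0 : Γ) + 0), SSign.pos) := rfl
        rw [hA, hB, hC] at h
        have e2 : α + (t + t) ≤ γ + ((0 : Γ) + 0) := by
          have h' := add_le_add_left hcon (γ - β - β)
          calc α + (t + t) = (α + γ) + (γ - β - β) := by rw [ht]; abel
          _ ≤ (β + β) + (γ - β - β) := h'
          _ = γ + ((0 : Γ) + 0) := by abel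
        have hbal : sadd (sadd (some (α + (t + t), SSign.pos))
              (some (γ + ((0 : Γ) + 0), SSign.neg))) (some (γ + ((0 : Γ) + 0), SSign.pos))
            = some (γ + ((0 : Γ) + 0), SSign.bal) := by
          rcases eq_or_lt_of_le e2 with he | hl
          · rw [he, sadd_eq_of_eq, if_neg (by decide), sadd_eq_of_eq, if_neg (by decide)]
          · rw [sadd_big_right _ _ hl, sadd_eq_of_eq, if_neg (by decide)]
        erw [hbal, slt_zero_iff] at h
        obtain ⟨m, hm⟩ := h
        exact SSign.noConfusion ((Prod.mk.injEq .. ▸ Option.some.injEq .. ▸ hm).2)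
  · rintro ⟨Ha, Hc, Hb⟩
    obtain ⟨α, hα⟩ := (slt_zero_iff _).mp Ha
    obtain ⟨γ, hγ⟩ := (slt_zero_iff _).mp Hc
    rw [hα, hγ]
    apply bwd_aux
    intro β s hbeq
    rw [hbeq] at Hb hb
    have hs : s ≠ SSign.bal := hb
    rw [hα, hγ, show smul (some (β, s)) (some (β, s)) = some (β + β, sgnMul s s) from rfl,
      sgnMul_self hs,
      show smul (some (α, SSign.pos)) (some (γ, SSign.pos))
        = some (α + γ, SSign.pos) from rfl, slt_some_pos_iff] at Hb
    exact Hb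

end TropPaper
end

section
/- Let A = (a_{ij}) ∈ (𝕊max^∨)^{n×n} be TPSD, let k > 1, and let j₁, …, j_k be pairwise distinct elements of [n]. Set w = a_{j₁j₂} ⊙ a_{j₂j₃} ⊙ ⋯ ⊙ a_{j_{k−1}j_k} ⊙ a_{j_kj₁}. Then |w| ≤ a_{j₁j₁} ⊙ a_{j₂j₂} ⊙ ⋯ ⊙ a_{j_kj_k}. If moreover A is TPD, then |w| < a_{j₁j₁} ⊙ a_{j₂j₂} ⊙ ⋯ ⊙ a_{j_kj_k}. -/
namespace TropPaper

section Helpers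
set_option linter.unusedSectionVars false

variable {Γ : Type} [AddCommGroup Γ] [LinearOrder Γ] [IsOrderedAddMonoid Γ]

/- basic simp lemmas -/

lemma sadd_szero (a : Smax Γ) : sadd a szero = a := by cases a <;> rfl

lemma szero_sadd (a : Smax Γ) : sadd szero a = a := rfl

lemma smul_szero (a : Smax Γ) : smul a szero = szero := by cases a <;> rfl

lemma szero_smul (a : Smax Γ) : smul szero a = szero := rfl

lemma sone_smul (a : Smax Γ) : smul sone a = a := by
  cases a with
  | none => rfl
  | some p =>
    obtain ⟨c, s⟩ := p
    show some (0 + c, sgnMul SSign.pos s) = some (c, s)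
    rw [zero_add]; rfl

lemma smul_sone (a : Smax Γ) : smul a sone = a := by
  cases a with
  | none => rfl
  | some p =>
    obtain ⟨c, s⟩ := p
    show some (c + 0, sgnMul s SSign.pos) = some (c, s)
    rw [add_zero]
    cases s <;> rfl

lemma ssub_szero (a : Smax Γ) : ssub a szero = a := by cases a <;> rfl

lemma ssub_none (a : Smax Γ) : ssub a none = a := by cases a <;> rfl

lemma sadd_comm (a b : Smax Γ) : sadd a b = sadd b a := by
  cases a with
  | none => cases b <;> rfl
  | some p =>
    cases b with
    | none => rfl
    | some q =>
      obtain ⟨c, s⟩ := p; obtain ⟨d, t⟩ := q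
      show (if c < d then some (d, t) else if d < c then some (c, s)
          else some (c, if s = t then s else SSign.bal)) =
        (if d < c then some (c, s) else if c < d then some (d, t)
          else some (d, if t = s then t else SSign.bal))
      rcases lt_trichotomy c d with h | h | h
      · rw [if_pos h, if_neg h.asymm, if_pos h]
      · subst h
        by_cases hst : s = t
        · subst hst; simp
        · simp [hst, Ne.symm hst]
      · rw [if_neg h.asymm, if_pos h, if_pos h]

lemma sadd_idem (a : Smax Γ) : sadd a a = a := by
  cases a with
  | none => rfl
  | some p =>
    obtain ⟨c, s⟩ := p
    show (if c < c then _ else if c < c then _ else some (c, if s = s then s else _)) = _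
    rw [if_neg (lt_irrefl c), if_neg (lt_irrefl c), if_pos rfl]

/- smod lemmas -/

lemma smod_szero : smod (szero : Smax Γ) = ⊥ := rfl

lemma smod_some (c : Γ) (s : SSign) : smod (some (c, s) : Smax Γ) = (c : WithBot Γ) := rfl

lemma smod_smul (a b : Smax Γ) : smod (smul a b) = smod a + smod b := by
  cases a with
  | none => cases b <;> simp [smul, smod]
  | some p =>
    obtain ⟨c, s⟩ := p
    cases b with
    | none => simp [smul, smod]
    | some q => obtain ⟨d, t⟩ := q; simp [smul, smod]

lemma sadd_eq_right {a b : Smax Γ} (h : smod a < smod b) : sadd a b = b := by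
  cases a with
  | none => rfl
  | some p =>
    obtain ⟨c, s⟩ := p
    cases b with
    | none => exact absurd h (by simp [smod])
    | some q =>
      obtain ⟨d, t⟩ := q
      have hcd : c < d := by simpa [smod] using h
      show (if c < d then _ else _) = _
      exact if_pos hcd

lemma sadd_eq_left {a b : Smax Γ} (h : smod b < smod a) : sadd a b = a := by
  rw [sadd_comm]; exact sadd_eq_right h

/- sumS lemmas -/

lemma sumS_cons {α : Type} (a : α) (l : List α) (f : α → Smax Γ) :
    sumS (a :: l) f = sadd (f a) (sumS l f) := rfl

lemma sumS_eq_szero {α : Type} {l : List α} {f : α → Smax Γ}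
    (h : ∀ x ∈ l, f x = szero) : sumS l f = szero := by
  induction l with
  | nil => rfl
  | cons a t ih =>
    rw [sumS_cons, h a List.mem_cons_self, szero_sadd]
    exact ih fun x hx => h x (List.mem_cons_of_mem a hx)

lemma sumS_eq_single {α : Type} {l : List α} {f : α → Smax Γ} {a : α}
    (hnd : l.Nodup) (ha : a ∈ l) (h : ∀ x ∈ l, x ≠ a → f x = szero) :
    sumS l f = f a := by
  induction l with
  | nil => exact absurd ha List.not_mem_nil
  | cons b t ih =>
    rw [List.nodup_cons] at hnd
    rw [sumS_cons]
    by_cases hb : b = a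
    · subst hb
      have : sumS t f = szero := by
        apply sumS_eq_szero
        intro x hx
        exact h x (List.mem_cons_of_mem b hx) (fun hxa => hnd.1 (hxa ▸ hx))
      rw [this, sadd_szero]
    · rw [h b List.mem_cons_self hb, szero_sadd]
      have hat : a ∈ t := by
        rcases List.mem_cons.mp ha with h' | h'
        · exact absurd h'.symm hb
        · exact h'
      exact ih hnd.2 hat (fun x hx hxa => h x (List.mem_cons_of_mem b hx) hxa)

lemma sumS_eq_pair {α : Type} {l : List α} {f : α → Smax Γ} {a b : α}
    (hnd : l.Nodup) (ha : a ∈ l) (hb : b ∈ l) (hab : a ≠ b)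
    (h : ∀ x ∈ l, x ≠ a → x ≠ b → f x = szero) :
    sumS l f = sadd (f a) (f b) := by
  induction l with
  | nil => exact absurd ha List.not_mem_nil
  | cons c t ih =>
    rw [List.nodup_cons] at hnd
    rw [sumS_cons]
    by_cases hca : c = a
    · subst hca
      have hbt : b ∈ t := by
        rcases List.mem_cons.mp hb with h' | h'
        · exact absurd h'.symm hab
        · exact h'
      have : sumS t f = f b := by
        apply sumS_eq_single hnd.2 hbt
        intro x hx hxb
        exact h x (List.mem_cons_of_mem c hx) (fun hxa => hnd.1 (hxa ▸ hx)) hxb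
      rw [this]
    · by_cases hcb : c = b
      · subst hcb
        have hat : a ∈ t := by
          rcases List.mem_cons.mp ha with h' | h'
          · exact absurd h'.symm hca
          · exact h'
        have : sumS t f = f a := by
          apply sumS_eq_single hnd.2 hat
          intro x hx hxa
          exact h x (List.mem_cons_of_mem c hx) hxa (fun hxb => hnd.1 (hxb ▸ hx))
        rw [this, sadd_comm]
      · rw [h c List.mem_cons_self hca hcb, szero_sadd]
        have hat : a ∈ t := by
          rcases List.mem_cons.mp ha with h' | h'
          · exact absurd h'.symm hca
          · exact h'
        have hbt : b ∈ t := by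
          rcases List.mem_cons.mp hb with h' | h'
          · exact absurd h'.symm hcb
          · exact h'
        exact ih hnd.2 hat hbt (fun x hx h1 h2 => h x (List.mem_cons_of_mem c hx) h1 h2)

/- prodS lemmas -/

lemma prodS_cons {α : Type} (a : α) (l : List α) (f : α → Smax Γ) :
    prodS (a :: l) f = smul (f a) (prodS l f) := rfl

lemma smod_prodS {α : Type} (l : List α) (f : α → Smax Γ) :
    smod (prodS l f) = (l.map fun x => smod (f x)).sum := by
  induction l with
  | nil =>
    show smod (sone : Smax Γ) = 0
    rfl
  | cons a t ih =>
    rw [prodS_cons, smod_smul, ih, List.map_cons, List.sum_cons]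

lemma isPos_smul {a b : Smax Γ} (ha : IsPos a) (hb : IsPos b) : IsPos (smul a b) := by
  cases a with
  | none => exact trivial
  | some p =>
    obtain ⟨c, s⟩ := p
    cases b with
    | none => exact trivial
    | some q =>
      obtain ⟨d, t⟩ := q
      have hs : s = SSign.pos := ha
      have ht : t = SSign.pos := hb
      subst hs; subst ht
      exact rfl

lemma prodS_isPos {α : Type} {l : List α} {f : α → Smax Γ}
    (h : ∀ x ∈ l, IsPos (f x)) : IsPos (prodS l f) := by
  induction l with
  | nil => exact rfl
  | cons a t ih =>
    rw [prodS_cons]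
    exact isPos_smul (h a List.mem_cons_self)
      (ih fun x hx => h x (List.mem_cons_of_mem a hx))

lemma prodS_ne_szero {α : Type} {l : List α} {f : α → Smax Γ}
    (h : ∀ x ∈ l, f x ≠ szero) : prodS l f ≠ szero := by
  induction l with
  | nil => exact fun h' => by cases h'
  | cons a t ih =>
    rw [prodS_cons]
    have h1 := h a List.mem_cons_self
    have h2 := ih fun x hx => h x (List.mem_cons_of_mem a hx)
    cases hfa : f a with
    | none => exact absurd hfa h1
    | some p =>
      cases hp : prodS t f with
      | none => exact absurd hp h2
      | some q =>
        obtain ⟨c, s⟩ := p; obtain ⟨d, t'⟩ := q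
        exact fun h' => by cases h'

lemma sabs_isPos (a : Smax Γ) : IsPos (sabs a) := by
  cases a with
  | none => exact trivial
  | some p => obtain ⟨c, s⟩ := p; exact rfl

lemma smod_sabs (a : Smax Γ) : smod (sabs a) = smod a := by
  cases a with
  | none => rfl
  | some p => obtain ⟨c, s⟩ := p; rfl

/- order lemmas -/

lemma sle_of_pos {a b : Smax Γ} (ha : IsPos a) (hb : IsPos b)
    (h : smod a ≤ smod b) : sle a b := by
  cases a with
  | none =>
    cases b with
    | none => exact Or.inl trivial
    | some q =>
      obtain ⟨v, t⟩ := q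
      have ht : t = SSign.pos := hb
      subst ht
      exact Or.inl (by exact rfl)
  | some p =>
    obtain ⟨u, s⟩ := p
    have hs : s = SSign.pos := ha
    subst hs
    cases b with
    | none => exact absurd h (by simp [smod])
    | some q =>
      obtain ⟨v, t⟩ := q
      have ht : t = SSign.pos := hb
      subst ht
      have huv : u ≤ v := by simpa [smod] using h
      show IsPos (sadd (some (v, SSign.pos)) (some (u, SSign.neg))) ∨
        IsBal (sadd (some (v, SSign.pos)) (some (u, SSign.neg)))
      show IsPos (if v < u then some (u, SSign.neg) else if u < v then some (v, SSign.pos)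
          else some (v, if SSign.pos = SSign.neg then SSign.pos else SSign.bal)) ∨
        IsBal (if v < u then some (u, SSign.neg) else if u < v then some (v, SSign.pos)
          else some (v, if SSign.pos = SSign.neg then SSign.pos else SSign.bal))
      rcases lt_or_eq_of_le huv with h' | h'
      · exact Or.inl ((congrArg IsPos ((if_neg h'.asymm).trans (if_pos h'))).mpr rfl)
      · subst h'
        exact Or.inr ((congrArg IsBal ((if_neg (lt_irrefl u)).trans (if_neg (lt_irrefl u)))).mpr rfl)

lemma slt_of_pos {a b : Smax Γ} (ha : IsPos a) (hb : IsPos b)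
    (h : smod a < smod b) : slt a b := by
  cases b with
  | none => exact absurd h (by simp [smod])
  | some q =>
    obtain ⟨v, t⟩ := q
    have ht : t = SSign.pos := hb
    subst ht
    cases a with
    | none =>
      constructor
      · exact rfl
      · exact fun h' => by cases h'
    | some p =>
      obtain ⟨u, s⟩ := p
      have hs : s = SSign.pos := ha
      subst hs
      have huv : u < v := by simpa [smod] using h
      have hval : ssub (some (v, SSign.pos)) (some (u, SSign.pos)) = some (v, SSign.pos) := by
        show (if v < u then some (u, SSign.neg) else if u < v then some (v, SSign.pos)
          else _) = _
        rw [if_neg huv.asymm, if_pos huv]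
      constructor
      · rw [hval]; exact rfl
      · rw [hval]; exact fun h' => by cases h'

end Helpers

end TropPaper

namespace TropPaper

section Helpers2
set_option linter.unusedSectionVars false

variable {Γ : Type} [AddCommGroup Γ] [LinearOrder Γ] [IsOrderedAddMonoid Γ]

/- WithBot arithmetic lemmas -/

lemma wb_add_lt_add {a b c d : WithBot Γ} (h1 : a < b) (h2 : c < d) :
    a + c < b + d := by
  cases b with
  | bot => exact absurd h1 (by simp)
  | coe b' =>
    cases d with
    | bot => exact absurd h2 (by simp)
    | coe d' =>
      cases a with
      | bot => rw [WithBot.bot_add]; exact (by simp [← WithBot.coe_add] : (⊥ : WithBot Γ) < ↑(b' + d'))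
      | coe a' =>
        cases c with
        | bot => rw [WithBot.add_bot]; exact (by simp [← WithBot.coe_add] : (⊥ : WithBot Γ) < ↑(b' + d'))
        | coe c' =>
          rw [← WithBot.coe_add, ← WithBot.coe_add, WithBot.coe_lt_coe]
          exact add_lt_add (WithBot.coe_lt_coe.mp h1) (WithBot.coe_lt_coe.mp h2)

lemma wb_two_le {a b : WithBot Γ} (h : a + a ≤ b + b) : a ≤ b := by
  by_contra hc
  rw [not_le] at hc
  exact absurd (wb_add_lt_add hc hc) (not_lt.mpr h)

lemma wb_two_lt {a b : WithBot Γ} (h : a + a < b + b) : a < b := by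
  by_contra hc
  rw [not_lt] at hc
  exact absurd (add_le_add hc hc) (not_le.mpr h)

lemma two_le' {a b : Γ} (h : a + a ≤ b + b) : a ≤ b := by
  by_contra hc
  rw [not_le] at hc
  exact absurd (add_lt_add hc hc) (not_lt.mpr h)

lemma two_lt' {a b : Γ} (h : a + a < b + b) : a < b := by
  by_contra hc
  rw [not_lt] at hc
  exact absurd (add_le_add hc hc) (not_le.mpr h)

lemma list_sum_le {α : Type} (l : List α) (f g : α → WithBot Γ)
    (h : ∀ x ∈ l, f x ≤ g x) :
    (l.map f).sum ≤ (l.map g).sum := by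
  induction l with
  | nil => simp
  | cons a t ih =>
    rw [List.map_cons, List.map_cons, List.sum_cons, List.sum_cons]
    exact add_le_add (h a List.mem_cons_self)
      (ih fun x hx => h x (List.mem_cons_of_mem a hx))

lemma list_sum_lt {α : Type} (l : List α) (hl : l ≠ []) (f g : α → WithBot Γ)
    (h : ∀ x ∈ l, f x < g x) :
    (l.map f).sum < (l.map g).sum := by
  induction l with
  | nil => exact absurd rfl hl
  | cons a t ih =>
    rw [List.map_cons, List.map_cons, List.sum_cons, List.sum_cons]
    cases t with
    | nil =>
      simp only [List.map_nil, List.sum_nil, add_zero]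
      exact h a List.mem_cons_self
    | cons b t' =>
      exact wb_add_lt_add (h a List.mem_cons_self)
        (ih (by simp) fun x hx => h x (List.mem_cons_of_mem a hx))

lemma exists_pos' [Nontrivial Γ] : ∃ e : Γ, 0 < e := by
  obtain ⟨g, hg⟩ := exists_ne (0 : Γ)
  rcases lt_trichotomy g 0 with h | h | h
  · exact ⟨-g, by simpa using h⟩
  · exact absurd h hg
  · exact ⟨g, h⟩

lemma half_ex (hdiv : DivisibleGrp Γ) (a : Γ) : ∃ b : Γ, b + b = a := by
  obtain ⟨b, hb⟩ := hdiv 2 (by norm_num) a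
  exact ⟨b, by rwa [two_nsmul] at hb⟩

/- quadratic form evaluations -/

lemma quad_unit {n : ℕ} (A : Matrix (Fin n) (Fin n) (Smax Γ)) (i : Fin n) :
    quadFormS A (fun t => if t = i then sone else szero) = A i i := by
  set x : Fin n → Smax Γ := fun t => if t = i then sone else szero with hx
  have hxi : x i = sone := by simp [hx]
  have hxo : ∀ t, t ≠ i → x t = szero := by intro t h1; simp [hx, h1]
  show sumS (List.finRange n) (fun i' => sumS (List.finRange n) fun j' =>
      smul (x i') (smul (A i' j') (x j'))) = A i i
  rw [sumS_eq_single (List.nodup_finRange n) (List.mem_finRange i)]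
  · rw [sumS_eq_single (List.nodup_finRange n) (List.mem_finRange i)]
    · rw [hxi, sone_smul, smul_sone]
    · intro t _ h1
      rw [hxo t h1, smul_szero, smul_szero]
  · intro t _ h1
    apply sumS_eq_szero
    intro u _
    rw [hxo t h1, szero_smul]

lemma quad_pair {n : ℕ} (A : Matrix (Fin n) (Fin n) (Smax Γ)) {i j : Fin n} (hij : i ≠ j)
    (lam mu : Smax Γ) :
    quadFormS A (fun t => if t = i then lam else if t = j then mu else szero) =
      sadd (sadd (smul lam (smul (A i i) lam)) (smul lam (smul (A i j) mu)))
           (sadd (smul mu (smul (A j i) lam)) (smul mu (smul (A j j) mu))) := by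
  set x : Fin n → Smax Γ := fun t => if t = i then lam else if t = j then mu else szero with hx
  have hxi : x i = lam := by simp [hx]
  have hxj : x j = mu := by simp [hx, hij.symm]
  have hxo : ∀ t, t ≠ i → t ≠ j → x t = szero := by intro t h1 h2; simp [hx, h1, h2]
  show sumS (List.finRange n) (fun i' => sumS (List.finRange n) fun j' =>
      smul (x i') (smul (A i' j') (x j'))) = _
  rw [sumS_eq_pair (List.nodup_finRange n) (List.mem_finRange i) (List.mem_finRange j) hij]
  · congr 1
    · rw [sumS_eq_pair (List.nodup_finRange n) (List.mem_finRange i) (List.mem_finRange j) hij]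
      · rw [hxi, hxj]
      · intro t _ h1 h2
        rw [hxo t h1 h2, smul_szero, smul_szero]
    · rw [sumS_eq_pair (List.nodup_finRange n) (List.mem_finRange i) (List.mem_finRange j) hij]
      · rw [hxi, hxj]
      · intro t _ h1 h2
        rw [hxo t h1 h2, smul_szero, smul_szero]
  · intro t _ h1 h2
    apply sumS_eq_szero
    intro u _
    rw [hxo t h1 h2, szero_smul]

/- test vectors are signed and nonzero -/

lemma unit_signed {n : ℕ} (i : Fin n) :
    VecSigned (fun t : Fin n => if t = i then (sone : Smax Γ) else szero) := by
  intro t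
  dsimp only
  split_ifs
  · exact fun h => by cases h
  · exact trivial

lemma unit_ne_zero {n : ℕ} (i : Fin n) :
    (fun t : Fin n => if t = i then (sone : Smax Γ) else szero) ≠ zeroVecS := by
  intro h
  have := congrFun h i
  simp only [if_pos rfl] at this
  exact by cases this

lemma pair_signed {n : ℕ} {i j : Fin n} (mv : Γ) {ms : SSign} (hms : ms ≠ SSign.bal) :
    VecSigned (fun t : Fin n => if t = i then (sone : Smax Γ)
      else if t = j then some (mv, ms) else szero) := by
  intro t
  dsimp only
  split_ifs with h1 h2
  · exact fun h => by cases h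
  · exact (congrArg IsSigned (if_pos h2)).mpr hms
  · exact (congrArg IsSigned (if_neg h2)).mpr trivial

lemma pair_ne_zero {n : ℕ} {i j : Fin n} (mv : Γ) (ms : SSign) :
    (fun t : Fin n => if t = i then (sone : Smax Γ)
      else if t = j then some (mv, ms) else szero) ≠ zeroVecS := by
  intro h
  have := congrFun h i
  simp only [if_pos rfl] at this
  exact by cases this

/- diagonal lemmas -/

lemma diag_tpsd {n : ℕ} {A : Matrix (Fin n) (Fin n) (Smax Γ)}
    (hsgn : MatSigned A) (hA : TPSD A) (i : Fin n) : IsPos (A i i) := by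
  have hq := hA _ (unit_signed i) (unit_ne_zero i)
  rw [quad_unit] at hq
  cases hAii : A i i with
  | none => exact trivial
  | some p =>
    obtain ⟨c, s⟩ := p
    rw [hAii] at hq
    have hsb : s ≠ SSign.bal := by have := hsgn i i; rwa [hAii] at this
    rcases hq with h | h
    · change IsPos (some (c, s)) at h; exact hAii ▸ h
    · change IsBal (some (c, s)) at h
      exact absurd h hsb

lemma diag_tpd {n : ℕ} {A : Matrix (Fin n) (Fin n) (Smax Γ)}
    (hA : TPD A) (i : Fin n) : ∃ d : Γ, A i i = some (d, SSign.pos) := by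
  have hq := hA _ (unit_signed i) (unit_ne_zero i)
  rw [quad_unit] at hq
  obtain ⟨h1, h2⟩ := hq
  rw [ssub_szero] at h1 h2
  cases hAii : A i i with
  | none => exact absurd hAii h2
  | some p =>
    obtain ⟨c, s⟩ := p
    rw [hAii] at h1
    have hs : s = SSign.pos := h1
    subst hs
    exact ⟨c, rfl⟩

end Helpers2

end TropPaper

namespace TropPaper

section Helpers3
set_option linter.unusedSectionVars false

variable {Γ : Type} [AddCommGroup Γ] [LinearOrder Γ] [IsOrderedAddMonoid Γ]

lemma notp_sadd {a b : Smax Γ} (ha : ∀ c : Γ, a ≠ some (c, SSign.pos))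
    (hb : ∀ c : Γ, b ≠ some (c, SSign.pos)) :
    ∀ c : Γ, sadd a b ≠ some (c, SSign.pos) := by
  cases a with
  | none => exact hb
  | some p =>
    obtain ⟨u, s⟩ := p
    cases b with
    | none => exact ha
    | some q =>
      obtain ⟨v, t⟩ := q
      intro c
      show (if u < v then some (v, t) else if v < u then some (u, s)
        else some (u, if s = t then s else SSign.bal)) ≠ _
      split_ifs with h1 h2 h3
      · exact hb c
      · exact ha c
      · exact ha c
      · intro hh
        rw [Option.some.injEq, Prod.mk.injEq] at hh
        exact by cases hh.2

lemma not_slt_of_notp {a : Smax Γ} (h : ∀ c : Γ, a ≠ some (c, SSign.pos)) :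
    ¬ slt szero a := by
  intro hslt
  obtain ⟨h1, h2⟩ := hslt
  rw [ssub_szero] at h1 h2
  cases a with
  | none => exact h2 rfl
  | some p =>
    obtain ⟨c, s⟩ := p
    have hs : s = SSign.pos := h1
    exact h c (by rw [hs])

lemma not_sle_neg (v : Γ) : ¬ sle szero (some (v, SSign.neg) : Smax Γ) := by
  intro h
  rcases h with h | h <;> cases h

lemma sadd_pos_neg_notp {u v : Γ} (h : u ≤ v) :
    ∀ c : Γ, sadd (some (u, SSign.pos)) (some (v, SSign.neg)) ≠ some (c, SSign.pos) := by
  intro c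
  show (if u < v then some (v, SSign.neg) else if v < u then some (u, SSign.pos)
      else some (u, if SSign.pos = SSign.neg then SSign.pos else SSign.bal)) ≠ _
  rcases lt_or_eq_of_le h with h' | h'
  · rw [if_pos h']
    intro hh
    rw [Option.some.injEq, Prod.mk.injEq] at hh
    exact by cases hh.2
  · subst h'
    rw [if_neg (lt_irrefl u), if_neg (lt_irrefl u)]
    intro hh
    rw [Option.some.injEq, Prod.mk.injEq] at hh
    have hh2 : SSign.bal = SSign.pos := hh.2
    exact by cases hh2

lemma sign_choice {s : SSign} (hsb : s ≠ SSign.bal) :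
    ∃ ms : SSign, ms ≠ SSign.bal ∧ sgnMul s ms = SSign.neg ∧ sgnMul ms s = SSign.neg ∧
      sgnMul ms (sgnMul SSign.pos ms) = SSign.pos := by
  cases s with
  | pos => exact ⟨SSign.neg, (fun h => by cases h), rfl, rfl, rfl⟩
  | neg => exact ⟨SSign.pos, (fun h => by cases h), rfl, rfl, rfl⟩
  | bal => exact absurd rfl hsb

lemma offdiag_tpsd [Nontrivial Γ] {n : ℕ} {A : Matrix (Fin n) (Fin n) (Smax Γ)}
    (hdiv : DivisibleGrp Γ) (hsym : SymmS A) (hsgn : MatSigned A) (hA : TPSD A)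
    {i j : Fin n} (hij : i ≠ j) :
    smod (A i j) + smod (A i j) ≤ smod (A i i) + smod (A j j) := by
  cases hij' : A i j with
  | none =>
    show (⊥ : WithBot Γ) + ⊥ ≤ _
    rw [WithBot.bot_add]
    exact bot_le
  | some p =>
    obtain ⟨c, s⟩ := p
    by_contra hcon
    rw [not_le, smod_some] at hcon
    obtain ⟨mv, h1, h2⟩ : ∃ mv : Γ, smod (A i i) < ((c + mv : Γ) : WithBot Γ) ∧
        smod (A j j) + ((mv : Γ) : WithBot Γ) < ((c : Γ) : WithBot Γ) := by
      obtain ⟨e, he⟩ := exists_pos' (Γ := Γ)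
      cases hii : A i i with
      | none =>
        cases hjj : A j j with
        | none =>
          refine ⟨0, WithBot.bot_lt_coe _, ?_⟩
          show (⊥ : WithBot Γ) + _ < _
          rw [WithBot.bot_add]
          exact WithBot.bot_lt_coe _
        | some q =>
          obtain ⟨d₂, s₂⟩ := q
          refine ⟨c - d₂ - e, WithBot.bot_lt_coe _, ?_⟩
          rw [smod_some, ← WithBot.coe_add, WithBot.coe_lt_coe]
          have heq : d₂ + (c - d₂ - e) = c - e := by abel
          rw [heq]
          exact sub_lt_self c he
      | some q1 =>
        obtain ⟨d₁, s₁⟩ := q1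
        cases hjj : A j j with
        | none =>
          refine ⟨d₁ - c + e, ?_, ?_⟩
          · rw [smod_some, WithBot.coe_lt_coe]
            have heq : c + (d₁ - c + e) = d₁ + e := by abel
            rw [heq]
            exact lt_add_of_pos_right d₁ he
          · show (⊥ : WithBot Γ) + _ < _
            rw [WithBot.bot_add]
            exact WithBot.bot_lt_coe _
        | some q2 =>
          obtain ⟨d₂, s₂⟩ := q2
          rw [hii, hjj, smod_some, smod_some, ← WithBot.coe_add, ← WithBot.coe_add,
            WithBot.coe_lt_coe] at hcon
          obtain ⟨b, hb⟩ := half_ex hdiv (d₁ - d₂)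
          refine ⟨b, ?_, ?_⟩
          · rw [smod_some, WithBot.coe_lt_coe]
            apply two_lt'
            have e1 : (c + b) + (c + b) = (c + c) + (b + b) := by abel
            rw [e1, hb]
            have e2 : d₁ + d₁ = (d₁ + d₂) + (d₁ - d₂) := by abel
            rw [e2]
            exact add_lt_add_left hcon _
          · rw [smod_some, ← WithBot.coe_add, WithBot.coe_lt_coe]
            apply two_lt'
            have e1 : (d₂ + b) + (d₂ + b) = (d₂ + d₂) + (b + b) := by abel
            rw [e1, hb]
            have e2 : (d₂ + d₂) + (d₁ - d₂) = d₁ + d₂ := by abel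
            rw [e2]
            exact hcon
    have hsb : s ≠ SSign.bal := by have := hsgn i j; rwa [hij'] at this
    obtain ⟨ms, hmsbal, hms1, hms2, _⟩ := sign_choice hsb
    have hq := hA _ (pair_signed (i := i) (j := j) mv hmsbal) (pair_ne_zero mv ms)
    rw [quad_pair A hij sone (some (mv, ms))] at hq
    simp only [sone_smul, smul_sone] at hq
    rw [hsym j i, hij'] at hq
    have e1 : sadd (A i i) (smul (some (c, s)) (some (mv, ms))) = some (c + mv, SSign.neg) := by
      have hT2 : smul (some (c, s)) (some (mv, ms)) = (some (c + mv, SSign.neg) : Smax Γ) := by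
        show some (c + mv, sgnMul s ms) = _
        rw [hms1]
      rw [hT2]
      apply sadd_eq_right
      rw [smod_some]
      exact h1
    have e2 : sadd (smul (some (mv, ms)) (some (c, s)))
        (smul (some (mv, ms)) (smul (A j j) (some (mv, ms)))) = some (mv + c, SSign.neg) := by
      have hT3 : smul (some (mv, ms)) (some (c, s)) = (some (mv + c, SSign.neg) : Smax Γ) := by
        show some (mv + c, sgnMul ms s) = _
        rw [hms2]
      rw [hT3]
      apply sadd_eq_left
      simp only [smod_smul (some (mv, ms)) (smul (A j j) (some (mv, ms))),
        smod_smul (A j j) (some (mv, ms)), smod_some]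
      rw [WithBot.coe_add]
      exact WithBot.add_lt_add_left WithBot.coe_ne_bot h2
    rw [e1, e2, add_comm mv c, sadd_idem (some (c + mv, SSign.neg))] at hq
    exact not_sle_neg _ hq

lemma offdiag_tpd {n : ℕ} {A : Matrix (Fin n) (Fin n) (Smax Γ)}
    (hdiv : DivisibleGrp Γ) (hsym : SymmS A) (hsgn : MatSigned A) (hA : TPD A)
    {i j : Fin n} (hij : i ≠ j) :
    smod (A i j) + smod (A i j) < smod (A i i) + smod (A j j) := by
  obtain ⟨d₁, hii⟩ := diag_tpd hA i
  obtain ⟨d₂, hjj⟩ := diag_tpd hA j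
  rw [hii, hjj]
  cases hij' : A i j with
  | none =>
    show (⊥ : WithBot Γ) + ⊥ < _
    rw [WithBot.bot_add, smod_some, smod_some, ← WithBot.coe_add]
    exact WithBot.bot_lt_coe _
  | some p =>
    obtain ⟨c, s⟩ := p
    by_contra hcon
    rw [not_lt, smod_some, smod_some, smod_some, ← WithBot.coe_add, ← WithBot.coe_add,
      WithBot.coe_le_coe] at hcon
    obtain ⟨b, hb⟩ := half_ex hdiv (d₁ - d₂)
    have hA1 : d₁ ≤ c + b := by
      apply two_le'
      have e1 : (c + b) + (c + b) = (c + c) + (b + b) := by abel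
      rw [e1, hb]
      have e2 : d₁ + d₁ = (d₁ + d₂) + (d₁ - d₂) := by abel
      rw [e2]
      exact add_le_add_left hcon _
    have hA2 : d₂ + b ≤ c := by
      apply two_le'
      have e1 : (d₂ + b) + (d₂ + b) = (d₂ + d₂) + (b + b) := by abel
      rw [e1, hb]
      have e2 : (d₂ + d₂) + (d₁ - d₂) = d₁ + d₂ := by abel
      rw [e2]
      exact hcon
    have hsb : s ≠ SSign.bal := by have := hsgn i j; rwa [hij'] at this
    obtain ⟨ms, hmsbal, hms1, hms2, hmsms⟩ := sign_choice hsb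
    have hq := hA _ (pair_signed (i := i) (j := j) b hmsbal) (pair_ne_zero b ms)
    rw [quad_pair A hij sone (some (b, ms))] at hq
    simp only [sone_smul, smul_sone] at hq
    rw [hsym j i, hij', hii, hjj] at hq
    apply not_slt_of_notp ?_ hq
    have hT2 : smul (some (c, s)) (some (b, ms)) = (some (c + b, SSign.neg) : Smax Γ) := by
      show some (c + b, sgnMul s ms) = _
      rw [hms1]
    have hT3 : smul (some (b, ms)) (some (c, s)) = (some (b + c, SSign.neg) : Smax Γ) := by
      show some (b + c, sgnMul ms s) = _
      rw [hms2]
    have hT4 : smul (some (b, ms)) (smul (some (d₂, SSign.pos)) (some (b, ms)))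
        = (some (b + (d₂ + b), SSign.pos) : Smax Γ) := by
      show some (b + (d₂ + b), sgnMul ms (sgnMul SSign.pos ms)) = _
      rw [hmsms]
    rw [hT2, hT3, hT4]
    apply notp_sadd
    · exact sadd_pos_neg_notp hA1
    · rw [sadd_comm (some (b + c, SSign.neg)) (some (b + (d₂ + b), SSign.pos))]
      apply sadd_pos_neg_notp
      exact add_le_add_right hA2 b

end Helpers3

end TropPaper


namespace TropPaper

/-- cycle-weight bound for TPSD/TPD matrices. The cycle has
length k = m+2 > 1, with pairwise distinct nodes j₀,…,j_{k−1} (indices taken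
cyclically in `Fin (m+2)`). -/
theorem cycle_weight_bound {Γ : Type} [AddCommGroup Γ] [LinearOrder Γ] [IsOrderedAddMonoid Γ] [Nontrivial Γ]
    (hdiv : DivisibleGrp Γ) {n m : ℕ}
    (A : Matrix (Fin n) (Fin n) (Smax Γ)) (hsym : SymmS A) (hsgn : MatSigned A)
    (j : Fin (m+2) → Fin n) (hj : Function.Injective j) :
    (TPSD A →
      sle (sabs (prodS (List.finRange (m+2)) fun l => A (j l) (j (l+1))))
        (prodS (List.finRange (m+2)) fun l => A (j l) (j l))) ∧
    (TPD A →
      slt (sabs (prodS (List.finRange (m+2)) fun l => A (j l) (j (l+1))))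
        (prodS (List.finRange (m+2)) fun l => A (j l) (j l))) := by
  have hl_ne : ∀ l : Fin (m+2), l ≠ l + 1 := by
    intro l h
    have hv := congrArg Fin.val h
    rw [Fin.val_add, Fin.val_one] at hv
    have hlt := l.isLt
    rcases Nat.lt_or_ge (l.val + 1) (m + 2) with hc | hc
    · rw [Nat.mod_eq_of_lt hc] at hv
      omega
    · have heq : l.val + 1 = m + 2 := by omega
      rw [heq, Nat.mod_self] at hv
      omega
  have hreindex : (∑ l : Fin (m+2), smod (A (j (l+1)) (j (l+1))))
      = ∑ l : Fin (m+2), smod (A (j l) (j l)) :=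
    Fintype.sum_equiv (Equiv.addRight (1 : Fin (m+2))) _ _ (fun l => rfl)
  constructor
  · intro hA
    apply sle_of_pos (sabs_isPos _)
    · apply prodS_isPos
      intro l _
      exact diag_tpsd hsgn hA (j l)
    · rw [smod_sabs]
      simp only [smod_prodS]
      rw [← Fin.sum_univ_def, ← Fin.sum_univ_def]
      apply wb_two_le
      have h2 : (∑ l : Fin (m+2), (smod (A (j l) (j (l+1))) + smod (A (j l) (j (l+1)))))
          ≤ ∑ l : Fin (m+2), (smod (A (j l) (j l)) + smod (A (j (l+1)) (j (l+1)))) :=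
        Finset.sum_le_sum fun l _ => offdiag_tpsd hdiv hsym hsgn hA (hj.ne (hl_ne l))
      rw [Finset.sum_add_distrib, Finset.sum_add_distrib, hreindex] at h2
      exact h2
  · intro hA
    apply slt_of_pos (sabs_isPos _)
    · apply prodS_isPos
      intro l _
      obtain ⟨d, hd⟩ := diag_tpd hA (j l)
      rw [hd]
      exact rfl
    · rw [smod_sabs]
      simp only [smod_prodS]
      rw [← Fin.sum_univ_def, ← Fin.sum_univ_def]
      apply wb_two_lt
      have h2 : (∑ l : Fin (m+2), (smod (A (j l) (j (l+1))) + smod (A (j l) (j (l+1)))))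
          < ∑ l : Fin (m+2), (smod (A (j l) (j l)) + smod (A (j (l+1)) (j (l+1)))) := by
        rw [Fin.sum_univ_def, Fin.sum_univ_def]
        apply list_sum_lt
        · intro hnil
          have hlen := List.length_finRange (n := m+2)
          rw [hnil] at hlen
          simp at hlen
        · intro x _
          exact offdiag_tpd hdiv hsym hsgn hA (hj.ne (hl_ne x))
      rw [Finset.sum_add_distrib, Finset.sum_add_distrib, hreindex] at h2
      exact h2

end TropPaper
end
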